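/- arXiv:1801.10125 — 2 statements merged into one kernel-verified Lean document; each statement's English description precedes it below -/
import Mathlib

section
/- Let X be a non-negative real random variable such that limsup_{n→∞} n · P(X > n) > 0 (limsup over n ∈ ℕ). Then there exists a function f : [0, ∞) → [0, ∞) such that: (i) limsup_{n→∞} n · P(X > f(n)) is a finite strictly positive real number (limsup over n ∈ ℕ); and (ii) f(x) + y ≤ f(x + y) for all x, y ∈ [0, ∞). -/
open MeasureTheory Filter Topology

private noncomputable def gRec (F : ℝ → ℝ) (τ : ℕ → ℝ) : ℕ → ℝ :=
  fun n => Nat.rec 0 (fun k gk =>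
    if F (((k : ℝ) + 1) + gk) ≤ 1/((k : ℝ)+1) then gk else max gk (τ k)) n

private theorem gRec_zero (F : ℝ → ℝ) (τ : ℕ → ℝ) : gRec F τ 0 = 0 := rfl

private theorem gRec_succ (F : ℝ → ℝ) (τ : ℕ → ℝ) (k : ℕ) :
    gRec F τ (k+1) = if F (((k : ℝ) + 1) + gRec F τ k) ≤ 1/((k : ℝ)+1)
      then gRec F τ k else max (gRec F τ k) (τ k) := rfl

theorem stmt_8
    (Ω : Type) [MeasurableSpace Ω] (P : Measure Ω) [IsProbabilityMeasure P]
    (X : Ω → ℝ) (hXmeas : Measurable X) (hXpos : ∀ ω, 0 ≤ X ω)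
    (hls : 0 < Filter.limsup (fun n : ℕ =>
        (((n : ℝ) * (P {ω | (n : ℝ) < X ω}).toReal : ℝ) : EReal)) atTop) :
    ∃ f : ℝ → ℝ, (∀ x, 0 ≤ x → 0 ≤ f x) ∧
      -- (i) `limsup n · P(X > f(n))` is a finite strictly positive real number
      (∃ L : ℝ, 0 < L ∧
        Filter.limsup (fun n : ℕ =>
          (((n : ℝ) * (P {ω | f n < X ω}).toReal : ℝ) : EReal)) atTop = (L : EReal)) ∧
      -- (ii) superadditivity-type property
      (∀ x y : ℝ, 0 ≤ x → 0 ≤ y → f x + y ≤ f (x + y)) := by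
  classical
  set F : ℝ → ℝ := fun t => (P {ω | t < X ω}).toReal with hFdef
  have hFnonneg : ∀ t, 0 ≤ F t := fun t => ENNReal.toReal_nonneg
  have hFle1 : ∀ t, F t ≤ 1 := by
    intro t
    have h := prob_le_one (μ := P) (s := {ω | t < X ω})
    have := ENNReal.toReal_mono (by simp) h
    simpa using this
  have hFanti : Antitone F := by
    intro s t hst
    refine ENNReal.toReal_mono (measure_ne_top _ _) (measure_mono ?_)
    intro ω hω
    exact lt_of_le_of_lt hst hω
  have hFtend : Tendsto (fun n : ℕ => F (n : ℝ)) atTop (𝓝 0) := by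
    have hmeas : ∀ n : ℕ, NullMeasurableSet {ω | (n : ℝ) < X ω} P :=
      fun n => (hXmeas measurableSet_Ioi).nullMeasurableSet
    have hanti : Antitone (fun n : ℕ => {ω | (n : ℝ) < X ω}) := by
      intro a b hab ω hω
      exact lt_of_le_of_lt (by exact_mod_cast hab : (a:ℝ) ≤ b) hω
    have hiInter : (⋂ n : ℕ, {ω | (n : ℝ) < X ω}) = ∅ := by
      ext ω
      simp only [Set.mem_iInter, Set.mem_setOf_eq, Set.mem_empty_iff_false, iff_false, not_forall,
        not_lt]
      obtain ⟨n, hn⟩ := exists_nat_gt (X ω)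
      exact ⟨n, hn.le⟩
    have h1 := MeasureTheory.tendsto_measure_iInter_atTop hmeas hanti ⟨0, measure_ne_top _ _⟩
    rw [hiInter, measure_empty] at h1
    have h2 := (ENNReal.tendsto_toReal (a := 0) (by simp)).comp h1
    exact (by simpa using h2 : Tendsto (ENNReal.toReal ∘ ⇑P ∘ fun i : ℕ => {ω | (i : ℝ) < X ω}) atTop (𝓝 0))
  have hτex : ∀ m : ℕ, ∃ t : ℝ, 0 ≤ t ∧ F t ≤ 1/((m : ℝ)+1) := by
    intro m
    have hpos : (0:ℝ) < 1/((m : ℝ)+1) := by positivity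
    have hev : ∀ᶠ n : ℕ in atTop, F (n : ℝ) < 1/((m : ℝ)+1) :=
      hFtend.eventually_lt_const hpos
    obtain ⟨n, hn⟩ := hev.exists
    exact ⟨(n : ℝ), Nat.cast_nonneg n, hn.le⟩
  choose τ hτ0 hτle using hτex
  set g : ℕ → ℝ := gRec F τ with hgdef
  have hg0 : ∀ n, 0 ≤ g n := by
    intro n
    induction n with
    | zero => simp [hgdef, gRec_zero]
    | succ k ih =>
      show 0 ≤ gRec F τ (k+1)
      rw [gRec_succ]
      split
      · exact ih
      · exact le_trans ih (le_max_left _ _)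
  have hgmono : Monotone g := by
    apply monotone_nat_of_le_succ
    intro n
    show gRec F τ n ≤ gRec F τ (n+1)
    rw [gRec_succ]
    split
    · exact le_refl _
    · exact le_max_left _ _
  have hgbound : ∀ n : ℕ, F (((n : ℝ)+1) + g (n+1)) ≤ 1/((n : ℝ)+1) := by
    intro n
    show F (((n : ℝ)+1) + gRec F τ (n+1)) ≤ _
    rw [gRec_succ]
    split
    · next h => exact h
    · next h =>
      refine le_trans (hFanti ?_) (hτle n)
      have h1 := le_max_right (gRec F τ n) (τ n)
      have h2 : (0:ℝ) ≤ (n : ℝ) + 1 := by positivity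
      linarith
  refine ⟨fun x => x + g ⌈x⌉₊, ?_, ?_, ?_⟩
  · intro x hx
    have := hg0 ⌈x⌉₊
    show 0 ≤ x + g ⌈x⌉₊
    linarith
  · -- (i)
    have hfun : (fun n : ℕ => (((n : ℝ) * (P {ω | (fun x => x + g ⌈x⌉₊) (n : ℝ) < X ω}).toReal : ℝ) : EReal))
        = fun n : ℕ => (((n : ℝ) * F ((n : ℝ) + g n) : ℝ) : EReal) := by
      funext n
      simp [Nat.ceil_natCast, hFdef]
    rw [hfun]
    set v : ℕ → EReal := fun n : ℕ => (((n : ℝ) * F ((n : ℝ) + g n) : ℝ) : EReal) with hv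
    have hub : ∀ᶠ n in atTop, v n ≤ (1 : EReal) := by
      filter_upwards [eventually_ge_atTop 1] with n hn
      obtain ⟨m, rfl⟩ : ∃ m, n = m + 1 := ⟨n - 1, by omega⟩
      have hb := hgbound m
      have hcast : ((m+1 : ℕ) : ℝ) = (m : ℝ) + 1 := by push_cast; ring
      have hpos : (0:ℝ) < (m : ℝ) + 1 := by positivity
      have h1 : ((m+1 : ℕ) : ℝ) * F (((m+1 : ℕ) : ℝ) + g (m+1)) ≤ 1 := by
        rw [hcast]
        calc ((m : ℝ)+1) * F (((m : ℝ)+1) + g (m+1))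
            ≤ ((m : ℝ)+1) * (1/((m : ℝ)+1)) :=
              mul_le_mul_of_nonneg_left hb hpos.le
          _ = 1 := by field_simp
      rw [hv]
      rw [show (1 : EReal) = ((1 : ℝ) : EReal) from rfl]
      exact EReal.coe_le_coe_iff.2 h1
    have hBdd : IsBoundedUnder (· ≤ ·) atTop v := ⟨(1 : EReal), by
      rw [eventually_map]; exact hub⟩
    have hlsle : limsup v atTop ≤ (1 : EReal) := limsup_le_of_le (by isBoundedDefault) hub
    have hlow : ∃ c' : ℝ, 0 < c' ∧ ∃ᶠ n in atTop, (c' : EReal) ≤ v n := by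
      by_cases hA : ∃ᶠ n : ℕ in atTop, ¬ (F (((n : ℝ)+1) + g n) ≤ 1/((n : ℝ)+1))
      · refine ⟨1/2, by norm_num, ?_⟩
        refine ((hA.and_eventually (eventually_ge_atTop 1)).mono ?_)
        rintro n ⟨hjump, hn1⟩
        have h2 : 1/((n : ℝ)+1) < F (((n : ℝ)+1) + g n) := not_le.mp hjump
        have h1 : F (((n : ℝ)+1) + g n) ≤ F ((n : ℝ) + g n) := hFanti (by linarith)
        have hn1' : (1:ℝ) ≤ (n : ℝ) := by exact_mod_cast hn1
        have hd : (1/((n : ℝ)+1)) * ((n : ℝ)+1) = 1 := by field_simp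
        have hgoal : (1/2 : ℝ) ≤ (n : ℝ) * F ((n : ℝ) + g n) := by
          nlinarith [mul_le_mul_of_nonneg_left h1 (by positivity : (0:ℝ) ≤ (n : ℝ)),
            mul_lt_mul_of_pos_left h2 (by linarith : (0:ℝ) < (n : ℝ))]
        exact EReal.coe_le_coe_iff.2 hgoal
      · rw [not_frequently] at hA
        push_neg at hA
        obtain ⟨N, hN⟩ := eventually_atTop.1 hA
        have hstep : ∀ k ≥ N, g (k+1) = g k := by
          intro k hk
          show gRec F τ (k+1) = gRec F τ k
          rw [gRec_succ, if_pos (hN k hk)]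
        have hconst : ∀ n ≥ N, g n = g N := by
          intro n hn
          induction n, hn using Nat.le_induction with
          | base => rfl
          | succ k hk ih => rw [hstep k hk, ih]
        set a := g N with ha
        set m := ⌈a⌉₊ with hm
        obtain ⟨z, hz0, hzl⟩ := exists_between hls
        have hzt : z ≠ ⊤ := (lt_of_lt_of_le hzl le_top).ne
        have hzb : z ≠ ⊥ := by
          intro h; rw [h] at hz0; exact (not_lt_bot hz0).elim
        set c : ℝ := z.toReal with hc
        have hc0 : 0 < c := by
          have h0c : ((0:ℝ) : EReal) < z := by exact_mod_cast hz0
          have := EReal.coe_toReal hzt hzb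
          rw [← this] at h0c
          exact_mod_cast h0c
        have hcz : (c : EReal) = z := EReal.coe_toReal hzt hzb
        have hfreq0 : ∃ᶠ n : ℕ in atTop,
            (c : EReal) < (((n : ℝ) * F (n : ℝ) : ℝ) : EReal) := by
          rw [hcz]
          exact frequently_lt_of_lt_limsup (by isBoundedDefault) hzl
        refine ⟨c/2, by positivity, ?_⟩
        rw [frequently_atTop]
        intro M
        have hsmall : ∀ᶠ n : ℕ in atTop, F (n : ℝ) < c/(2*((m : ℝ)+1)) :=
          hFtend.eventually_lt_const (by positivity)
        obtain ⟨N₂, hN₂⟩ := eventually_atTop.1 hsmall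
        obtain ⟨n, hnge, hnlt⟩ := frequently_atTop.1
          (hfreq0.and_eventually (eventually_ge_atTop (max (M + m) (max (N + m) N₂))))
          (max (M + m) (max (N + m) N₂))
        obtain ⟨hnlt, hnbig⟩ := hnlt
        have hnM : M + m ≤ n := le_trans (le_max_left _ _) hnbig
        have hnN : N + m ≤ n := le_trans (le_trans (le_max_left _ _) (le_max_right _ _)) hnbig
        have hnN₂ : N₂ ≤ n := le_trans (le_trans (le_max_right _ _) (le_max_right _ _)) hnbig
        refine ⟨n - m, by omega, ?_⟩
        have hga : g (n - m) = a := hconst _ (by omega)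
        have hcast : ((n - m : ℕ) : ℝ) = (n : ℝ) - (m : ℝ) := by
          push_cast [Nat.cast_sub (by omega : m ≤ n)]
          ring
        have ham : a ≤ (m : ℝ) := Nat.le_ceil a
        have hF1 : F ((n : ℝ)) ≤ F (((n - m : ℕ) : ℝ) + a) := by
          apply hFanti
          rw [hcast]; linarith
        rw [hcast] at hF1
        have hvn : c < (n : ℝ) * F (n : ℝ) := EReal.coe_lt_coe_iff.1 hnlt
        have hFn : F (n : ℝ) < c/(2*((m : ℝ)+1)) := hN₂ n hnN₂
        have hFnn : (0:ℝ) ≤ F (n : ℝ) := hFnonneg _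
        have hmn : (m : ℝ) ≤ (n : ℝ) := by exact_mod_cast (by omega : m ≤ n)
        have hgoal : c/2 ≤ ((n - m : ℕ) : ℝ) * F (((n - m : ℕ) : ℝ) + g (n - m)) := by
          rw [hga, hcast]
          have hnm0 : (0:ℝ) ≤ (n : ℝ) - (m : ℝ) := by linarith
          have hε : 2*((m : ℝ)+1) * (c/(2*((m : ℝ)+1))) = c := by field_simp
          have hε0 : (0:ℝ) ≤ c/(2*((m : ℝ)+1)) := by positivity
          nlinarith [mul_le_mul_of_nonneg_left hF1 hnm0,
            mul_le_mul_of_nonneg_left hFn.le (by positivity : (0:ℝ) ≤ (m : ℝ))]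
        rw [hv]
        exact EReal.coe_le_coe_iff.2 hgoal
    obtain ⟨c', hc'0, hfreq⟩ := hlow
    have hge : (c' : EReal) ≤ limsup v atTop := le_limsup_of_frequently_le hfreq hBdd
    have hneT : limsup v atTop ≠ ⊤ := by
      intro h
      rw [h, top_le_iff] at hlsle
      exact (EReal.coe_ne_top 1) (by exact_mod_cast hlsle)
    have hneB : limsup v atTop ≠ ⊥ := by
      intro h
      rw [h] at hge
      exact absurd hge (by simp)
    refine ⟨(limsup v atTop).toReal, ?_, (EReal.coe_toReal hneT hneB).symm⟩
    have h0 : ((0:ℝ) : EReal) < (((limsup v atTop).toReal : ℝ) : EReal) := by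
      rw [EReal.coe_toReal hneT hneB]
      exact lt_of_lt_of_le (by exact_mod_cast hc'0) hge
    exact_mod_cast h0
  · intro x y hx hy
    have hle : ⌈x⌉₊ ≤ ⌈x + y⌉₊ := Nat.ceil_mono (by linarith)
    have := hgmono hle
    show x + g ⌈x⌉₊ + y ≤ (x + y) + g ⌈x + y⌉₊
    linarith
end

section
/- Let P_n(z) be a polynomial of degree n in one complex variable with leading coefficient c ≠ 0. Then for every r > 0, the Lebesgue measure (on ℂ ≅ ℝ²) of the set { z ∈ ℂ : |P_n(z)| ≤ r^n } is at most π n r² |c|^{−2/n}. -/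
open MeasureTheory Polynomial

private lemma aux_pow_le_prod (R : ℝ) (hR : 0 < R) :
    ∀ (m : Multiset ℝ), (∀ x ∈ m, R < x) → R ^ Multiset.card m ≤ m.prod := by
  intro m
  induction m using Multiset.induction with
  | empty => simp
  | cons x s ih =>
    intro h
    have hx : R < x := h x (Multiset.mem_cons_self x s)
    have hs : R ^ Multiset.card s ≤ s.prod := ih fun y hy => h y (Multiset.mem_cons_of_mem hy)
    simp only [Multiset.card_cons, Multiset.prod_cons, pow_succ]
    calc R ^ Multiset.card s * R ≤ s.prod * x :=
          mul_le_mul hs hx.le hR.le (le_trans (pow_nonneg hR.le _) hs)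
      _ = x * s.prod := mul_comm _ _

private lemma aux_pow_lt_prod (R : ℝ) (hR : 0 < R) (m : Multiset ℝ) (hm : m ≠ 0)
    (h : ∀ x ∈ m, R < x) : R ^ Multiset.card m < m.prod := by
  obtain ⟨x, hx⟩ := Multiset.exists_mem_of_ne_zero hm
  obtain ⟨s, rfl⟩ := Multiset.exists_cons_of_mem hx
  have hxR : R < x := h x (Multiset.mem_cons_self x s)
  have hs : R ^ Multiset.card s ≤ s.prod := aux_pow_le_prod R hR s
    (fun y hy => h y (Multiset.mem_cons_of_mem hy))
  have hpow : (0:ℝ) < R ^ Multiset.card s := pow_nonneg hR.le _ |>.lt_of_ne' ?_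
  · simp only [Multiset.card_cons, Multiset.prod_cons, pow_succ, mul_comm (R ^ Multiset.card s) R]
    calc R * R ^ Multiset.card s < x * R ^ Multiset.card s := by
          exact mul_lt_mul_of_pos_right hxR hpow
      _ ≤ x * s.prod := mul_le_mul_of_nonneg_left hs (hR.trans hxR).le
  · exact (pow_pos hR _).ne'

theorem stmt_11
    (p : Polynomial ℂ) (n : ℕ) (hn : 0 < n) (hdeg : p.natDegree = n)
    (c : ℂ) (hlead : p.leadingCoeff = c) (hc : c ≠ 0) (r : ℝ) (hr : 0 < r) :
    volume {z : ℂ | ‖p.eval z‖ ≤ r ^ n} ≤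
      ENNReal.ofReal (Real.pi * n * r ^ 2 * ‖c‖ ^ (-(2 / (n : ℝ)))) := by
  have hp0 : p ≠ 0 := by
    intro h; apply hc; rw [← hlead, h, leadingCoeff_zero]
  have habs : (0:ℝ) < ‖c‖ := by
    simpa using (norm_pos_iff.mpr hc)
  set R : ℝ := r * ‖c‖ ^ (-(1 / (n : ℝ))) with hRdef
  have hRpos : 0 < R := mul_pos hr (Real.rpow_pos_of_pos habs _)
  have hsplit : Splits p := IsAlgClosed.splits p
  have hcard : Multiset.card p.roots = n := by
    have := (Splits.natDegree_eq_card_roots hsplit)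
    rw [hdeg] at this
    simpa using this.symm
  -- factorization
  have hfac : p = C c * (p.roots.map fun a => X - C a).prod := by
    rw [← hlead]; exact hsplit.eq_prod_roots
  have heval : ∀ z : ℂ, ‖p.eval z‖
      = ‖c‖ * ((p.roots.map fun a => ‖z - a‖).prod) := by
    intro z
    conv_lhs => rw [hfac]
    rw [eval_mul, eval_C, norm_mul]
    congr 1
    rw [eval_multiset_prod, Multiset.map_map, show ∀ m : Multiset ℂ, ‖m.prod‖ = (m.map (‖·‖)).prod from
      fun m => map_multiset_prod normHom m, Multiset.map_map]
    refine congrArg _ (Multiset.map_congr rfl fun a _ => ?_)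
    simp
  -- R^n * |c| = r^n
  have hRn : ‖c‖ * R ^ n = r ^ n := by
    rw [hRdef, mul_pow, ← Real.rpow_natCast (‖c‖ ^ (-(1 / (n:ℝ)))) n,
      ← Real.rpow_mul habs.le]
    have : -(1 / (n:ℝ)) * n = -1 := by
      field_simp
    rw [this, Real.rpow_neg_one]
    field_simp [habs.ne']
  -- subset of union of balls
  have hsub : {z : ℂ | ‖p.eval z‖ ≤ r ^ n} ⊆
      ⋃ a ∈ p.roots.toFinset, Metric.closedBall a R := by
    intro z hz
    simp only [Set.mem_setOf_eq] at hz
    have hex : ∃ a ∈ p.roots, ‖z - a‖ ≤ R := by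
      by_contra hcon
      push_neg at hcon
      have hmne : (p.roots.map fun a => ‖z - a‖) ≠ 0 := by
        simp only [ne_eq, Multiset.map_eq_zero]
        intro h
        rw [h] at hcard; simp at hcard; omega
      have hstrict : ∀ x ∈ (p.roots.map fun a => ‖z - a‖), R < x := by
        intro x hx
        obtain ⟨a, ha, rfl⟩ := Multiset.mem_map.mp hx
        exact hcon a ha
      have hlt := aux_pow_lt_prod R hRpos _ hmne hstrict
      rw [Multiset.card_map, hcard] at hlt
      have : r ^ n < ‖c‖ * (p.roots.map fun a => ‖z - a‖).prod := by
        rw [← hRn]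
        exact mul_lt_mul_of_pos_left hlt habs
      rw [← heval z] at this
      exact absurd hz (not_le.mpr this)
    obtain ⟨a, ha, haR⟩ := hex
    refine Set.mem_biUnion (Multiset.mem_toFinset.mpr ha) ?_
    simpa [Complex.dist_eq] using haR
  calc volume {z : ℂ | ‖p.eval z‖ ≤ r ^ n}
      ≤ volume (⋃ a ∈ p.roots.toFinset, Metric.closedBall a R) := measure_mono hsub
    _ ≤ ∑ a ∈ p.roots.toFinset, volume (Metric.closedBall a R) :=
        measure_biUnion_finset_le _ _
    _ = p.roots.toFinset.card • (ENNReal.ofReal R ^ 2 * NNReal.pi) := by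
        simp [Complex.volume_closedBall]
    _ ≤ n • (ENNReal.ofReal R ^ 2 * NNReal.pi) := by
        gcongr
        exact le_trans (Multiset.toFinset_card_le _) (le_of_eq hcard)
    _ = ENNReal.ofReal (Real.pi * n * r ^ 2 * ‖c‖ ^ (-(2 / (n : ℝ)))) := by
        have hR2 : r ^ 2 * ‖c‖ ^ (-(2/(n:ℝ))) = R ^ 2 := by
          rw [hRdef, mul_pow, ← Real.rpow_natCast (‖c‖ ^ (-(1 / (n:ℝ)))) 2,
            ← Real.rpow_mul habs.le]
          congr 1
          push_cast
          ring
        rw [nsmul_eq_mul, ← ENNReal.ofReal_pow hRpos.le,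
          show Real.pi * n * r ^ 2 * ‖c‖ ^ (-(2 / (n:ℝ)))
            = (n:ℝ) * ((r ^ 2 * ‖c‖ ^ (-(2/(n:ℝ)))) * Real.pi) by ring,
          hR2, ENNReal.ofReal_mul (by positivity), ENNReal.ofReal_mul (by positivity),
          ENNReal.ofReal_natCast, ← NNReal.coe_real_pi, ENNReal.ofReal_coe_nnreal]
end
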